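/- There is a bijection between plane trees with n edges and noncrossing perfect matchings on 2n points: label the boundary of a plane tree with 1,...,2n in increasing order counter-clockwise from the root, so each edge receives two indices (i,j) with i < j; the resulting set of n pairs is a noncrossing perfect matching of {1,...,2n}, and this map is a bijection. -/

import Mathlib

/-- A plane tree: a root with a linearly ordered list of subtrees. -/
inductive PlaneTree : Type
  | node : List PlaneTree → PlaneTree

/-- Number of edges of a plane tree. -/
def PlaneTree.edges : PlaneTree → ℕ
  | .node ts => (ts.attach.map fun t => t.1.edges + 1).sum
decreasing_by
  have := List.sizeOf_lt_of_mem t.2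
  simp only [PlaneTree.node.sizeOf_spec] at *
  omega

/-- Boundary labeling of a forest starting at label `i`: each edge of the
tree receives the labels on its left and right sides. -/
def matchList : ℕ → List PlaneTree → Finset (ℕ × ℕ)
  | _, [] => ∅
  | i, PlaneTree.node cs :: ts =>
    insert (i, i + 2 * (PlaneTree.node cs).edges + 1)
      (matchList (i + 1) cs ∪ matchList (i + 2 * (PlaneTree.node cs).edges + 2) ts)
termination_by i ts => sizeOf ts

/-- The noncrossing perfect matching on `{1,…,2n}` encoding a plane tree with
`n` edges, via the boundary labeling `1,…,2n` counter-clockwise from the root. -/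
def PlaneTree.toMatching : PlaneTree → Finset (ℕ × ℕ)
  | .node ts => matchList 1 ts

/-- `M` is a perfect matching of `{1,…,2n}`, with pairs written `(i,j)`, `i < j`. -/
def IsMatching (n : ℕ) (M : Finset (ℕ × ℕ)) : Prop :=
  (∀ p ∈ M, 1 ≤ p.1 ∧ p.1 < p.2 ∧ p.2 ≤ 2 * n) ∧
  ∀ k, 1 ≤ k → k ≤ 2 * n → ∃! p : ℕ × ℕ, p ∈ M ∧ (p.1 = k ∨ p.2 = k)

/-- `M` is a noncrossing perfect matching of `{1,…,2n}`. -/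
def IsNoncrossingMatching (n : ℕ) (M : Finset (ℕ × ℕ)) : Prop :=
  IsMatching n M ∧ ¬ ∃ a b c d : ℕ, a < b ∧ b < c ∧ c < d ∧ (a, c) ∈ M ∧ (b, d) ∈ M

/-- The cyclic index-shift map `φ` on matchings: shift all indices down by one,
with `1 ↦ 2n`. -/
def phi (n : ℕ) (M : Finset (ℕ × ℕ)) : Finset (ℕ × ℕ) :=
  ((M.filter fun p => p.1 = 1).image fun p => (p.2 - 1, 2 * n)) ∪
  ((M.filter fun p => p.1 ≠ 1).image fun p => (p.1 - 1, p.2 - 1))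

/-- Boundary labeling gives a bijection between plane trees with `n` edges and
noncrossing perfect matchings of `{1,…,2n}`. -/
lemma edges_node (ts : List PlaneTree) :
    (PlaneTree.node ts).edges = (ts.map fun t => t.edges + 1).sum := by
  rw [PlaneTree.edges]
  congr 1
  exact List.attach_map_val (l := ts) (f := fun t => t.edges + 1)

lemma edges_nil : (PlaneTree.node []).edges = 0 := by simp [edges_node]

lemma edges_cons (c : PlaneTree) (ts : List PlaneTree) :
    (PlaneTree.node (c :: ts)).edges = c.edges + 1 + (PlaneTree.node ts).edges := by
  simp [edges_node]

lemma matchList_nil (i : ℕ) : matchList i [] = ∅ := by rw [matchList]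

lemma matchList_cons (i : ℕ) (cs ts : List PlaneTree) :
    matchList i (PlaneTree.node cs :: ts) =
    insert (i, i + 2 * (PlaneTree.node cs).edges + 1)
      (matchList (i + 1) cs ∪ matchList (i + 2 * (PlaneTree.node cs).edges + 2) ts) := by
  rw [matchList]

def NC (M : Finset (ℕ × ℕ)) : Prop :=
  ¬ ∃ a b c d : ℕ, a < b ∧ b < c ∧ c < d ∧ (a, c) ∈ M ∧ (b, d) ∈ M

def IM (i m : ℕ) (M : Finset (ℕ × ℕ)) : Prop :=
  (∀ p ∈ M, i ≤ p.1 ∧ p.1 < p.2 ∧ p.2 < m) ∧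
  ∀ k, i ≤ k → k < m → ∃! p : ℕ × ℕ, p ∈ M ∧ (p.1 = k ∨ p.2 = k)

lemma forward : ∀ N ts i, sizeOf ts ≤ N →
    IM i (i + 2 * (PlaneTree.node ts).edges) (matchList i ts) ∧ NC (matchList i ts) := by
  intro N
  induction N with
  | zero => intro ts i h; cases ts <;> simp at h
  | succ N ih =>
    intro ts i h
    match ts with
    | [] =>
      rw [matchList_nil, edges_nil]
      refine ⟨⟨by simp, fun k hk1 hk2 => absurd hk2 (by omega)⟩, by rintro ⟨a,b,c,d,_,_,_,h,_⟩; simp at h⟩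
    | PlaneTree.node cs :: ts' =>
      have h1 : sizeOf cs ≤ N := by
        simp only [List.cons.sizeOf_spec, PlaneTree.node.sizeOf_spec] at h; omega
      have h2 : sizeOf ts' ≤ N := by
        simp only [List.cons.sizeOf_spec, PlaneTree.node.sizeOf_spec] at h; omega
      obtain ⟨⟨hA1, hA2⟩, hA3⟩ := ih cs (i + 1) h1
      obtain ⟨⟨hB1, hB2⟩, hB3⟩ := ih ts' (i + 2 * (PlaneTree.node cs).edges + 2) h2
      rw [matchList_cons, edges_cons]
      set e := (PlaneTree.node cs).edges with he
      set f := (PlaneTree.node ts').edges with hf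
      set A := matchList (i + 1) cs with hA
      set B := matchList (i + 2 * e + 2) ts' with hB
      refine ⟨⟨?_, ?_⟩, ?_⟩
      · intro p hp
        simp only [Finset.mem_insert, Finset.mem_union] at hp
        rcases hp with rfl | hp | hp
        · refine ⟨le_refl _, ?_, ?_⟩ <;> simp <;> omega
        · have := hA1 p hp; omega
        · have := hB1 p hp; omega
      · intro k hk1 hk2
        rcases eq_or_ne k i with rfl | hki
        · refine ⟨(k, k + 2 * e + 1), ⟨Finset.mem_insert_self _ _, Or.inl rfl⟩, ?_⟩
          rintro q ⟨hq, hq2⟩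
          simp only [Finset.mem_insert, Finset.mem_union] at hq
          rcases hq with rfl | hq | hq
          · rfl
          · exfalso; have := hA1 q hq; omega
          · exfalso; have := hB1 q hq; omega
        · rcases eq_or_ne k (i + 2 * e + 1) with rfl | hkj
          · refine ⟨(i, i + 2 * e + 1), ⟨Finset.mem_insert_self _ _, Or.inr rfl⟩, ?_⟩
            rintro q ⟨hq, hq2⟩
            simp only [Finset.mem_insert, Finset.mem_union] at hq
            rcases hq with rfl | hq | hq
            · rfl
            · exfalso; have := hA1 q hq; omega
            · exfalso; have := hB1 q hq; omega
          · rcases lt_or_ge k (i + 2 * e + 1) with hlt | hge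
            · obtain ⟨p, ⟨hpA, hpk⟩, hpu⟩ := hA2 k (by omega) (by omega)
              refine ⟨p, ⟨Finset.mem_insert_of_mem (Finset.mem_union_left _ hpA), hpk⟩, ?_⟩
              rintro q ⟨hq, hq2⟩
              simp only [Finset.mem_insert, Finset.mem_union] at hq
              rcases hq with rfl | hq | hq
              · exfalso
                have e1 : (i, i + 2 * e + 1).1 = i := rfl
                have e2 : (i, i + 2 * e + 1).2 = i + 2 * e + 1 := rfl
                omega
              · exact hpu q ⟨hq, hq2⟩
              · exfalso; have := hB1 q hq; omega
            · obtain ⟨p, ⟨hpB, hpk⟩, hpu⟩ := hB2 k (by omega) (by omega)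
              refine ⟨p, ⟨Finset.mem_insert_of_mem (Finset.mem_union_right _ hpB), hpk⟩, ?_⟩
              rintro q ⟨hq, hq2⟩
              simp only [Finset.mem_insert, Finset.mem_union] at hq
              rcases hq with rfl | hq | hq
              · exfalso
                have e1 : (i, i + 2 * e + 1).1 = i := rfl
                have e2 : (i, i + 2 * e + 1).2 = i + 2 * e + 1 := rfl
                omega
              · exfalso; have := hA1 q hq; omega
              · exact hpu q ⟨hq, hq2⟩
      · rintro ⟨a, b, c, d, hab, hbc, hcd, hm1, hm2⟩
        simp only [Finset.mem_insert, Finset.mem_union, Prod.mk.injEq] at hm1 hm2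
        rcases hm1 with ⟨ha', hc'⟩ | hm1 | hm1 <;> rcases hm2 with ⟨hb', hd'⟩ | hm2 | hm2
        · omega
        · have : i + 1 ≤ (b, d).1 ∧ (b, d).1 < (b, d).2 ∧ (b, d).2 < i + 1 + 2 * e := hA1 _ hm2
          simp at this; omega
        · have : i + 2 * e + 2 ≤ (b, d).1 ∧ (b, d).1 < (b, d).2 ∧ (b, d).2 < i + 2 * e + 2 + 2 * f := hB1 _ hm2
          simp at this; omega
        · have : i + 1 ≤ (a, c).1 ∧ (a, c).1 < (a, c).2 ∧ (a, c).2 < i + 1 + 2 * e := hA1 _ hm1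
          simp at this; omega
        · exact hA3 ⟨a, b, c, d, hab, hbc, hcd, hm1, hm2⟩
        · have t1 : i + 1 ≤ (a, c).1 ∧ (a, c).1 < (a, c).2 ∧ (a, c).2 < i + 1 + 2 * e := hA1 _ hm1
          have t2 : i + 2 * e + 2 ≤ (b, d).1 ∧ (b, d).1 < (b, d).2 ∧ (b, d).2 < i + 2 * e + 2 + 2 * f := hB1 _ hm2
          simp at t1 t2; omega
        · have : i + 2 * e + 2 ≤ (a, c).1 ∧ (a, c).1 < (a, c).2 ∧ (a, c).2 < i + 2 * e + 2 + 2 * f := hB1 _ hm1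
          simp at this; omega
        · have t1 : i + 2 * e + 2 ≤ (a, c).1 ∧ (a, c).1 < (a, c).2 ∧ (a, c).2 < i + 2 * e + 2 + 2 * f := hB1 _ hm1
          have t2 : i + 1 ≤ (b, d).1 ∧ (b, d).1 < (b, d).2 ∧ (b, d).2 < i + 1 + 2 * e := hA1 _ hm2
          simp at t1 t2; omega
        · exact hB3 ⟨a, b, c, d, hab, hbc, hcd, hm1, hm2⟩

lemma forward' (ts : List PlaneTree) (i : ℕ) :
    IM i (i + 2 * (PlaneTree.node ts).edges) (matchList i ts) ∧ NC (matchList i ts) :=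
  forward (sizeOf ts) ts i le_rfl

lemma matchList_inj : ∀ N ts ts' i, sizeOf ts ≤ N →
    matchList i ts = matchList i ts' → ts = ts' := by
  intro N
  induction N with
  | zero => intro ts ts' i h; cases ts <;> simp at h
  | succ N ih =>
    intro ts ts' i h heq
    match ts, ts' with
    | [], [] => rfl
    | [], PlaneTree.node cs' :: ts' =>
      rw [matchList_nil, matchList_cons] at heq
      exact absurd heq.symm (Finset.insert_ne_empty _ _)
    | PlaneTree.node cs :: ts, [] =>
      rw [matchList_nil, matchList_cons] at heq
      exact absurd heq (Finset.insert_ne_empty _ _)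
    | PlaneTree.node cs :: ts, PlaneTree.node cs' :: ts' =>
      have h1 : sizeOf cs ≤ N := by
        simp only [List.cons.sizeOf_spec, PlaneTree.node.sizeOf_spec] at h; omega
      have h2 : sizeOf ts ≤ N := by
        simp only [List.cons.sizeOf_spec, PlaneTree.node.sizeOf_spec] at h; omega
      rw [matchList_cons, matchList_cons] at heq
      have hAb := (forward' cs (i + 1)).1.1
      have hBb := (forward' ts (i + 2 * (PlaneTree.node cs).edges + 2)).1.1
      have hAb' := (forward' cs' (i + 1)).1.1
      have hBb' := (forward' ts' (i + 2 * (PlaneTree.node cs').edges + 2)).1.1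
      generalize hE : (PlaneTree.node cs).edges = e at heq hBb hAb
      generalize hE' : (PlaneTree.node cs').edges = e' at heq hBb' hAb'
      -- first entry membership
      have hmem : (i, i + 2 * e + 1) ∈ insert (i, i + 2 * e' + 1)
          (matchList (i + 1) cs' ∪ matchList (i + 2 * e' + 2) ts') := by
        rw [← heq]; exact Finset.mem_insert_self _ _
      have hee : e = e' := by
        simp only [Finset.mem_insert, Finset.mem_union, Prod.mk.injEq] at hmem
        rcases hmem with ⟨_, hc⟩ | hm | hm
        · omega
        · have t1 : i + 1 ≤ i := (hAb' _ hm).1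
          omega
        · have t1 : i + 2 * e' + 2 ≤ i := (hBb' _ hm).1
          omega
      subst hee
      have hAA : matchList (i + 1) cs = matchList (i + 1) cs' := by
        ext q
        constructor
        · intro hq
          have hb := hAb q hq
          have : q ∈ insert (i, i + 2 * e + 1)
              (matchList (i + 1) cs' ∪ matchList (i + 2 * e + 2) ts') := by
            rw [← heq]
            exact Finset.mem_insert_of_mem (Finset.mem_union_left _ hq)
          simp only [Finset.mem_insert, Finset.mem_union] at this
          rcases this with rfl | hm | hm
          · exfalso
            have e1 : (i, i + 2 * e + 1).1 = i := rfl
            omega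
          · exact hm
          · exfalso; have := hBb' q hm; omega
        · intro hq
          have hb := hAb' q hq
          have : q ∈ insert (i, i + 2 * e + 1)
              (matchList (i + 1) cs ∪ matchList (i + 2 * e + 2) ts) := by
            rw [heq]
            exact Finset.mem_insert_of_mem (Finset.mem_union_left _ hq)
          simp only [Finset.mem_insert, Finset.mem_union] at this
          rcases this with rfl | hm | hm
          · exfalso
            have e1 : (i, i + 2 * e + 1).1 = i := rfl
            omega
          · exact hm
          · exfalso; have := hBb q hm; omega
      have hBB : matchList (i + 2 * e + 2) ts = matchList (i + 2 * e + 2) ts' := by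
        ext q
        constructor
        · intro hq
          have hb := hBb q hq
          have : q ∈ insert (i, i + 2 * e + 1)
              (matchList (i + 1) cs' ∪ matchList (i + 2 * e + 2) ts') := by
            rw [← heq]
            exact Finset.mem_insert_of_mem (Finset.mem_union_right _ hq)
          simp only [Finset.mem_insert, Finset.mem_union] at this
          rcases this with rfl | hm | hm
          · exfalso
            have e1 : (i, i + 2 * e + 1).1 = i := rfl
            omega
          · exfalso; have := hAb' q hm; omega
          · exact hm
        · intro hq
          have hb := hBb' q hq
          have : q ∈ insert (i, i + 2 * e + 1)
              (matchList (i + 1) cs ∪ matchList (i + 2 * e + 2) ts) := by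
            rw [heq]
            exact Finset.mem_insert_of_mem (Finset.mem_union_right _ hq)
          simp only [Finset.mem_insert, Finset.mem_union] at this
          rcases this with rfl | hm | hm
          · exfalso
            have e1 : (i, i + 2 * e + 1).1 = i := rfl
            omega
          · exfalso; have := hAb q hm; omega
          · exact hm
      rw [ih cs cs' (i + 1) h1 hAA, ih ts ts' (i + 2 * e + 2) h2 hBB]

lemma surj : ∀ N i M, IM i (i + N) M → NC M →
    ∃ ts : List PlaneTree, 2 * (PlaneTree.node ts).edges = N ∧ matchList i ts = M := by
  intro N
  induction N using Nat.strong_induction_on with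
  | _ N ih =>
  intro i M hIM hnc
  obtain ⟨hM1, hM2⟩ := hIM
  rcases Nat.eq_zero_or_pos N with rfl | hN
  · refine ⟨[], by simp [edges_nil], ?_⟩
    rw [matchList_nil]
    symm
    rw [Finset.eq_empty_iff_forall_notMem]
    intro p hp
    have := hM1 p hp
    omega
  · obtain ⟨p, ⟨hpM, hp⟩, hpu⟩ := hM2 i le_rfl (by omega)
    obtain ⟨p1, j⟩ := p
    have hb := hM1 _ hpM
    simp only at hb hp
    have hp1 : i = p1 := by omega
    subst hp1
    -- now (i, j) ∈ M, i < j < i + N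
    have hij : i < j := hb.2.1
    have hjN : j < i + N := hb.2.2
    have hclass : ∀ q ∈ M, q = (i, j) ∨ (i < q.1 ∧ q.2 < j) ∨ (j < q.1 ∧ q.2 < i + N) := by
      intro q hq
      have hqb := hM1 q hq
      rcases eq_or_ne q.1 i with hq1 | hq1
      · left
        have := hpu q ⟨hq, Or.inl hq1⟩
        rw [this]
      · right
        obtain ⟨r, -, hru⟩ := hM2 j (by omega) (by omega)
        have hqj1 : q.1 ≠ j := by
          intro hh
          have h1 : q = r := hru q ⟨hq, Or.inl hh⟩
          have h2 : (i, j) = r := hru (i, j) ⟨hpM, Or.inr rfl⟩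
          rw [h1, ← h2] at hq1
          exact hq1 rfl
        have hqj2 : q.2 ≠ j := by
          intro hh
          have h1 : q = r := hru q ⟨hq, Or.inr hh⟩
          have h2 : (i, j) = r := hru (i, j) ⟨hpM, Or.inr rfl⟩
          rw [h1, ← h2] at hq1
          exact hq1 rfl
        rcases lt_or_ge q.1 j with hlt | hge
        · left
          refine ⟨by omega, ?_⟩
          by_contra hcon
          push_neg at hcon
          have hq' : (q.1, q.2) ∈ M := hq
          exact hnc ⟨i, q.1, j, q.2, by omega, by omega, by omega, hpM, hq'⟩
        · right
          exact ⟨by omega, hqb.2.2⟩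
    set M₁ := M.filter (fun q => q.2 < j) with hM₁
    set M₂ := M.filter (fun q => j < q.1) with hM₂
    have hsplit : M = insert (i, j) (M₁ ∪ M₂) := by
      ext q
      simp only [Finset.mem_insert, Finset.mem_union, Finset.mem_filter, hM₁, hM₂]
      constructor
      · intro hq
        rcases hclass q hq with h | h | h
        · exact Or.inl h
        · exact Or.inr (Or.inl ⟨hq, h.2⟩)
        · exact Or.inr (Or.inr ⟨hq, h.1⟩)
      · rintro (rfl | ⟨h, -⟩ | ⟨h, -⟩)
        · exact hpM
        · exact h
        · exact h
    -- M₁ is an interval matching on [i+1, j)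
    have hIM₁ : IM (i + 1) (i + 1 + (j - i - 1)) M₁ := by
      constructor
      · intro q hq
        obtain ⟨hqM, hq2⟩ := Finset.mem_filter.mp hq
        have hqb := hM1 q hqM
        rcases hclass q hqM with rfl | h | h
        · have hjj : j < j := hq2
          omega
        · omega
        · omega
      · intro k hk1 hk2
        obtain ⟨r, ⟨hrM, hrk⟩, hru⟩ := hM2 k (by omega) (by omega)
        have hr₁ : r ∈ M₁ := by
          rcases hclass r hrM with rfl | h | h
          · have : i = k ∨ j = k := hrk
            omega
          · exact Finset.mem_filter.mpr ⟨hrM, by omega⟩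
          · exfalso
            have hrb := hM1 r hrM
            omega
        refine ⟨r, ⟨hr₁, hrk⟩, fun q hq => hru q ⟨(Finset.mem_filter.mp hq.1).1, hq.2⟩⟩
    have hIM₂ : IM (j + 1) (j + 1 + (i + N - j - 1)) M₂ := by
      constructor
      · intro q hq
        obtain ⟨hqM, hq2⟩ := Finset.mem_filter.mp hq
        have hqb := hM1 q hqM
        have hq2' : j < q.1 := hq2
        omega
      · intro k hk1 hk2
        obtain ⟨r, ⟨hrM, hrk⟩, hru⟩ := hM2 k (by omega) (by omega)
        have hr₂ : r ∈ M₂ := by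
          rcases hclass r hrM with rfl | h | h
          · have : i = k ∨ j = k := hrk
            omega
          · exfalso
            have hrb := hM1 r hrM
            omega
          · exact Finset.mem_filter.mpr ⟨hrM, by omega⟩
        refine ⟨r, ⟨hr₂, hrk⟩, fun q hq => hru q ⟨(Finset.mem_filter.mp hq.1).1, hq.2⟩⟩
    have hnc₁ : NC M₁ := by
      rintro ⟨a, b, c, d, h1, h2, h3, h4, h5⟩
      exact hnc ⟨a, b, c, d, h1, h2, h3, (Finset.mem_filter.mp h4).1, (Finset.mem_filter.mp h5).1⟩
    have hnc₂ : NC M₂ := by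
      rintro ⟨a, b, c, d, h1, h2, h3, h4, h5⟩
      exact hnc ⟨a, b, c, d, h1, h2, h3, (Finset.mem_filter.mp h4).1, (Finset.mem_filter.mp h5).1⟩
    obtain ⟨cs, hcse, hcsm⟩ := ih (j - i - 1) (by omega) (i + 1) M₁ hIM₁ hnc₁
    obtain ⟨ts', htse, htsm⟩ := ih (i + N - j - 1) (by omega) (j + 1) M₂ hIM₂ hnc₂
    refine ⟨PlaneTree.node cs :: ts', ?_, ?_⟩
    · rw [edges_cons]; omega
    · have hj1 : i + 2 * (PlaneTree.node cs).edges + 1 = j := by omega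
      have hj2 : i + 2 * (PlaneTree.node cs).edges + 2 = j + 1 := by omega
      rw [matchList_cons, hj1, hj2, hcsm, htsm, ← hsplit]

lemma toMatching_node (ts : List PlaneTree) :
    (PlaneTree.node ts).toMatching = matchList 1 ts := rfl

theorem toMatching_bijOn (n : ℕ) :
    (∀ T : PlaneTree, T.edges = n → IsNoncrossingMatching n T.toMatching) ∧
    Set.BijOn PlaneTree.toMatching {T : PlaneTree | T.edges = n}
      {M : Finset (ℕ × ℕ) | IsNoncrossingMatching n M} := by
  have key : ∀ T : PlaneTree, T.edges = n → IsNoncrossingMatching n T.toMatching := by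
    rintro ⟨ts⟩ hT
    obtain ⟨⟨h1, h2⟩, h3⟩ := forward' ts 1
    rw [hT] at h1 h2
    rw [toMatching_node]
    refine ⟨⟨?_, ?_⟩, h3⟩
    · intro p hp
      have := h1 p hp
      omega
    · intro k hk1 hk2
      exact h2 k hk1 (by omega)
  refine ⟨key, fun T hT => key T hT, ?_, ?_⟩
  · rintro ⟨ts⟩ hT ⟨ts'⟩ hT' h
    rw [toMatching_node, toMatching_node] at h
    rw [matchList_inj (sizeOf ts) ts ts' 1 le_rfl h]
  · intro M hM
    simp only [Set.mem_setOf_eq] at hM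
    obtain ⟨⟨hb, hu⟩, hnc'⟩ := hM
    obtain ⟨ts, he, hm⟩ := surj (2 * n) 1 M
      ⟨fun p hp => by have := hb p hp; omega, fun k hk1 hk2 => hu k hk1 (by omega)⟩ hnc'
    refine ⟨PlaneTree.node ts, ?_, ?_⟩
    · show (PlaneTree.node ts).edges = n
      omega
    · rw [toMatching_node]
      exact hm
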